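/- Let 0 < a < b, I = {z ∈ ℂ : |z| ≤ a}, O = {z ∈ ℂ : |z| ≥ b}, and let k be a positive integer. Then for every rational function r = P/Q with P, Q complex polynomials of degree at most k, P ≠ 0 and Q ≠ 0, the separation ratio satisfies sup_{z ∈ O} |r(z)| / inf_{z ∈ I} |r(z)| ≥ (a/b)^k, where the ratio is interpreted in the extended nonnegative reals [0, ∞]. Hence the infimum of the Zolotarev third problem Z_k(O, I) equals (a/b)^k and is attained by r(z) = z^{−k}. -/

import Mathlib

open Polynomial

noncomputable def Complex.abs : AbsoluteValue ℂ ℝ :=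
  IsAbsoluteValue.toAbsoluteValue (norm : ℂ → ℝ)

@[simp] lemma Complex.abs_apply (z : ℂ) : Complex.abs z = ‖z‖ := rfl

lemma Complex.norm_eq_abs (z : ℂ) : ‖z‖ = Complex.abs z := rfl

lemma Complex.abs_ofReal (x : ℝ) : Complex.abs (x : ℂ) = |x| := by
  simp [Complex.abs_apply]

lemma pow_eq_nonneg' {x y : ℝ} (hx : 0 ≤ x) (hy : 0 ≤ y) {N : ℕ} (hN : N ≠ 0) (h : x^N = y^N) : x = y := by
  rcases lt_trichotomy x y with h'|h'|h'
  · exact absurd h (ne_of_lt (pow_lt_pow_left₀ h' hx hN))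
  · exact h'
  · exact absurd h.symm (ne_of_lt (pow_lt_pow_left₀ h' hy hN))

lemma abs_one_of_pow' {ζ : ℂ} {N : ℕ} (hN : N ≠ 0) (h : ζ^N = 1) : Complex.abs ζ = 1 := by
  have h1 : Complex.abs ζ ^ N = 1 ^ N := by rw [← map_pow, h, map_one, one_pow]
  exact pow_eq_nonneg' (Complex.abs.nonneg ζ) zero_le_one hN h1

lemma circle_avoid (K : ℕ) (hK : 0 < K) :
    ∃ c : ℝ, 0 < c ∧ c ≤ 1 ∧ ∀ R : ℝ, 0 < R → ∀ T : Multiset ℂ, Multiset.card T ≤ K →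
      ∃ u : ℂ, Complex.abs u = R ∧ ∀ t ∈ T, c * R ≤ Complex.abs (u - t) := by
  obtain ⟨ζ, hprim⟩ : ∃ ζ : ℂ, IsPrimitiveRoot ζ (K+1) :=
    ⟨_, Complex.isPrimitiveRoot_exp (K+1) (Nat.succ_ne_zero K)⟩
  have hζabs : ∀ s : ℕ, Complex.abs (ζ ^ s) = 1 := fun s => by
    rw [map_pow, abs_one_of_pow' (Nat.succ_ne_zero K) hprim.pow_eq_one, one_pow]
  have hne : (Finset.Icc 1 K).Nonempty := ⟨1, Finset.mem_Icc.mpr ⟨le_refl 1, hK⟩⟩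
  set c0 : ℝ := (Finset.Icc 1 K).inf' hne (fun m => Complex.abs (ζ ^ m - 1)) with hc0def
  have hc0pos : 0 < c0 := by
    rw [hc0def, Finset.lt_inf'_iff]
    intro m hm
    rw [Finset.mem_Icc] at hm
    have h1 : ζ ^ m ≠ 1 := hprim.pow_ne_one_of_pos_of_lt (by omega) (Nat.lt_succ_of_le hm.2)
    exact Complex.abs.pos (sub_ne_zero.mpr h1)
  have hdist : ∀ s t : ℕ, s < t → t ≤ K → c0 ≤ Complex.abs (ζ^t - ζ^s) := by
    intro s t hst htK
    have he : ζ^t - ζ^s = ζ^s * (ζ^(t-s) - 1) := by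
      rw [mul_sub, mul_one, ← pow_add]
      congr 2
      omega
    rw [he, map_mul, hζabs, one_mul]
    exact Finset.inf'_le _ (Finset.mem_Icc.mpr ⟨by omega, by omega⟩)
  refine ⟨min (c0/2) 1, by positivity, min_le_right _ _, ?_⟩
  intro R hR T hT
  set c := min (c0/2) 1 with hcdef
  have key : ∃ s ∈ Finset.range (K+1), ∀ t ∈ T, c * R ≤ Complex.abs ((R:ℂ) * ζ^s - t) := by
    by_contra hcon
    push_neg at hcon
    have hcon' : ∀ s ∈ Finset.range (K+1), ∃ t, t ∈ T.toFinset ∧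
        Complex.abs ((R:ℂ) * ζ^s - t) < c * R := by
      intro s hs
      obtain ⟨t, ht, hlt⟩ := hcon s hs
      exact ⟨t, Multiset.mem_toFinset.mpr ht, hlt⟩
    choose! g hg1 hg2 using hcon'
    have hcard : T.toFinset.card < (Finset.range (K+1)).card := by
      rw [Finset.card_range]
      exact lt_of_le_of_lt (le_trans T.toFinset_card_le hT) (Nat.lt_succ_self K)
    obtain ⟨s, hs, s', hs', hne', heq⟩ :=
      Finset.exists_ne_map_eq_of_card_lt_of_maps_to hcard (fun s hs => hg1 s hs)
    rw [Finset.mem_range] at hs hs'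
    -- distance between the two sample points
    have hbig : c0 * R ≤ Complex.abs (((R:ℂ) * ζ^s) - ((R:ℂ) * ζ^s')) := by
      have : ((R:ℂ) * ζ^s) - ((R:ℂ) * ζ^s') = (R:ℂ) * (ζ^s - ζ^s') := by ring
      rw [this, map_mul, Complex.abs_ofReal, abs_of_pos hR, mul_comm]
      rcases lt_or_gt_of_ne hne' with h' | h'
      · rw [Complex.abs.map_sub]
        exact mul_le_mul_of_nonneg_left (hdist s s' h' (by omega)) hR.le
      · exact mul_le_mul_of_nonneg_left (hdist s' s h' (by omega)) hR.le
    have hsmall : Complex.abs (((R:ℂ) * ζ^s) - ((R:ℂ) * ζ^s')) < c0 * R := by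
      have h1 := hg2 s (Finset.mem_range.mpr hs)
      have h2 := hg2 s' (Finset.mem_range.mpr hs')
      rw [heq] at h1
      calc Complex.abs (((R:ℂ) * ζ^s) - ((R:ℂ) * ζ^s'))
          = Complex.abs ((((R:ℂ) * ζ^s) - g s') - (((R:ℂ) * ζ^s') - g s')) := by ring_nf
        _ ≤ Complex.abs (((R:ℂ) * ζ^s) - g s') + Complex.abs (((R:ℂ) * ζ^s') - g s') := by
            exact AbsoluteValue.sub_le_add _ _ _ -- abs (x - y) ≤ abs x + abs y ?
        _ < c * R + c * R := by exact add_lt_add h1 h2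
        _ ≤ c0/2 * R + c0/2 * R := by
            have := min_le_left (c0/2) 1
            gcongr <;> exact this
        _ = c0 * R := by ring
    exact absurd hbig (not_le.mpr hsmall)
  obtain ⟨s, _, hgood⟩ := key
  refine ⟨(R:ℂ) * ζ^s, ?_, hgood⟩
  rw [map_mul, Complex.abs_ofReal, abs_of_pos hR, hζabs, mul_one]


-- swap of Finset prod and Multiset prod
lemma prod_swap_ms {F : Finset ℂ} (M : Multiset ℂ) (f : ℂ → ℂ → ℝ) :
    ∏ ζ ∈ F, (M.map (f ζ)).prod = (M.map (fun x => ∏ ζ ∈ F, f ζ x)).prod := by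
  induction M using Multiset.induction with
  | empty => simp
  | cons x M ih => simp [Multiset.map_cons, Multiset.prod_cons, Finset.prod_mul_distrib, ih]

lemma prod_rot_norm {N : ℕ} (hN : 0 < N) (z α : ℂ) (hz : z ≠ 0) :
    ∏ ζ ∈ nthRootsFinset N (1 : ℂ), Complex.abs (ζ * z - α) = Complex.abs (z^N - α^N) := by
  obtain ⟨ξ, hprim⟩ : ∃ ξ : ℂ, IsPrimitiveRoot ξ N := ⟨_, Complex.isPrimitiveRoot_exp N hN.ne'⟩
  have hcard : (nthRootsFinset N (1 : ℂ)).card = N := hprim.card_nthRootsFinset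
  have hident : ∀ w : ℂ, ∏ ζ ∈ nthRootsFinset N (1 : ℂ), (w - ζ) = w^N - 1 := by
    intro w
    have h := congrArg (Polynomial.eval w) (X_pow_sub_one_eq_prod hN hprim)
    simpa [eval_prod] using h.symm
  have hfac : ∀ ζ : ℂ, ζ * z - α = (-z) * (α/z - ζ) := by
    intro ζ; field_simp; ring
  calc ∏ ζ ∈ nthRootsFinset N (1 : ℂ), Complex.abs (ζ * z - α)
      = Complex.abs (∏ ζ ∈ nthRootsFinset N (1 : ℂ), (ζ * z - α)) := (map_prod Complex.abs _ _).symm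
    _ = Complex.abs ((-z)^N * ∏ ζ ∈ nthRootsFinset N (1 : ℂ), (α/z - ζ)) := by
        rw [Finset.prod_congr rfl (fun ζ _ => hfac ζ), Finset.prod_mul_distrib,
          Finset.prod_const, hcard]
    _ = Complex.abs ((-z)^N * ((α/z)^N - 1)) := by rw [hident]
    _ = Complex.abs ((-1:ℂ)^N * (α^N - z^N)) := by
        congr 1
        rw [div_pow, neg_pow]
        field_simp
    _ = Complex.abs (z^N - α^N) := by
        rw [map_mul, map_pow, Complex.abs.map_neg, map_one, one_pow, one_mul,
          Complex.abs.map_sub]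

lemma prod_rot_poly {N : ℕ} (hN : 0 < N) (P : Polynomial ℂ) (z : ℂ) (hz : z ≠ 0) :
    ∏ ζ ∈ nthRootsFinset N (1 : ℂ), Complex.abs (P.eval (ζ * z))
      = Complex.abs P.leadingCoeff ^ N
        * (P.roots.map (fun α => Complex.abs (z^N - α^N))).prod := by
  obtain ⟨ξ, hprim⟩ : ∃ ξ : ℂ, IsPrimitiveRoot ξ N := ⟨_, Complex.isPrimitiveRoot_exp N hN.ne'⟩
  have hcard : (nthRootsFinset N (1 : ℂ)).card = N := hprim.card_nthRootsFinset
  have heval : ∀ y : ℂ, Complex.abs (P.eval y)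
      = Complex.abs P.leadingCoeff * (P.roots.map (fun α => Complex.abs (y - α))).prod := by
    intro y
    conv_lhs => rw [(IsAlgClosed.splits P).eq_prod_roots]
    rw [eval_mul, eval_C, map_mul, eval_multiset_prod, map_multiset_prod,
      Multiset.map_map, Multiset.map_map]
    congr 1
    rw [Multiset.map_congr rfl]
    intro α _
    simp
  calc ∏ ζ ∈ nthRootsFinset N (1 : ℂ), Complex.abs (P.eval (ζ * z))
      = ∏ ζ ∈ nthRootsFinset N (1 : ℂ),
          (Complex.abs P.leadingCoeff * (P.roots.map (fun α => Complex.abs (ζ * z - α))).prod) :=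
        Finset.prod_congr rfl (fun ζ _ => heval _)
    _ = Complex.abs P.leadingCoeff ^ N
        * ∏ ζ ∈ nthRootsFinset N (1 : ℂ), (P.roots.map (fun α => Complex.abs (ζ * z - α))).prod := by
        rw [Finset.prod_mul_distrib, Finset.prod_const, hcard]
    _ = Complex.abs P.leadingCoeff ^ N
        * (P.roots.map (fun α => Complex.abs (z^N - α^N))).prod := by
        rw [prod_swap_ms P.roots (fun ζ α => Complex.abs (ζ * z - α))]
        congr 1
        exact congrArg Multiset.prod (Multiset.map_congr rfl (fun α _ => prod_rot_norm hN z α hz))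


lemma card_nthRootsFinsetC {N : ℕ} (hN : 0 < N) : (nthRootsFinset N (1 : ℂ)).card = N :=
  (Complex.isPrimitiveRoot_exp N hN.ne').card_nthRootsFinset

lemma abs_sub_le' (x y : ℂ) : Complex.abs (x - y) ≤ Complex.abs x + Complex.abs y := by
  simpa using Complex.abs.sub_le x 0 y

lemma abs_sub_ge' (x y : ℂ) : Complex.abs y - Complex.abs x ≤ Complex.abs (x - y) := by
  have h := Complex.abs.sub_le y x 0
  simp only [sub_zero] at h
  have h2 : Complex.abs (y - x) = Complex.abs (x - y) := Complex.abs.map_sub y x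
  linarith

lemma ms_prod_nonneg (M : Multiset ℂ) (f : ℂ → ℝ) (h : ∀ x ∈ M, 0 ≤ f x) :
    0 ≤ (M.map f).prod := by
  apply Multiset.prod_nonneg
  intro r hr
  obtain ⟨x, hx, rfl⟩ := Multiset.mem_map.mp hr
  exact h x hx

lemma ms_prod_pos (M : Multiset ℂ) (f : ℂ → ℝ) (h : ∀ x ∈ M, 0 < f x) :
    0 < (M.map f).prod := by
  induction M using Multiset.induction with
  | empty => simp
  | cons x M ih =>
    simp only [Multiset.map_cons, Multiset.prod_cons]
    exact mul_pos (h x (Multiset.mem_cons_self _ _))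
      (ih (fun y hy => h y (Multiset.mem_cons_of_mem hy)))

lemma ms_prod_le (M : Multiset ℂ) (f g : ℂ → ℝ) (h0 : ∀ x ∈ M, 0 ≤ f x)
    (h : ∀ x ∈ M, f x ≤ g x) : (M.map f).prod ≤ (M.map g).prod := by
  induction M using Multiset.induction with
  | empty => simp
  | cons x M ih =>
    simp only [Multiset.map_cons, Multiset.prod_cons]
    have hf := h0 x (Multiset.mem_cons_self _ _)
    have hfg := h x (Multiset.mem_cons_self _ _)
    exact mul_le_mul hfg
      (ih (fun y hy => h0 y (Multiset.mem_cons_of_mem hy))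
        (fun y hy => h y (Multiset.mem_cons_of_mem hy)))
      (ms_prod_nonneg M f (fun y hy => h0 y (Multiset.mem_cons_of_mem hy)))
      (le_trans hf hfg)

lemma ms_prod_const_mul (M : Multiset ℂ) (f : ℂ → ℝ) (c : ℝ) :
    (M.map (fun x => c * f x)).prod = c ^ Multiset.card M * (M.map f).prod := by
  induction M using Multiset.induction with
  | empty => simp
  | cons x M ih =>
    simp only [Multiset.map_cons, Multiset.prod_cons, Multiset.card_cons, ih]
    ring

lemma est1 {c S ρ U V : ℝ} (hc0 : 0 < c) (hc1 : c ≤ 1) (hS : 0 < S) (hρ : 0 ≤ ρ)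
    (hU1 : c * S ≤ U) (hU2 : ρ - S ≤ U) (hV : V ≤ S + ρ) : c/3 * V ≤ U := by
  rcases le_or_gt ρ (2*S) with h|h
  · nlinarith
  · nlinarith

lemma est2 {c q S ρ U V : ℝ} (hc0 : 0 < c) (hc1 : c ≤ 1) (hq0 : 0 < q) (hq1 : q ≤ 1)
    (hS : 0 < S) (hρ : 0 ≤ ρ) (hV1 : c * (q*S) ≤ V) (hV2 : ρ - q*S ≤ V)
    (hU : U ≤ S + ρ) (hU0 : 0 ≤ U) : (c/3*q) * U ≤ V := by
  rcases le_or_gt ρ (2*S) with h|h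
  · calc c/3*q*U ≤ c/3*q*(S+ρ) := mul_le_mul_of_nonneg_left hU (by positivity)
      _ ≤ c/3*q*(3*S) := mul_le_mul_of_nonneg_left (by linarith) (by positivity)
      _ = c*(q*S) := by ring
      _ ≤ V := hV1
  · have hq : c/3*q ≤ 1/3 := by nlinarith
    have h1 : c/3*q*U ≤ 1/3*(S+ρ) := mul_le_mul hq hU hU0 (by norm_num)
    have h2 : q*S ≤ S := by nlinarith
    linarith

lemma core_ineq (a b : ℝ) (ha : 0 < a) (hab : a < b) (k : ℕ) (hk : 0 < k)
    (P Q : Polynomial ℂ) (hP : P ≠ 0) (hQ : Q ≠ 0)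
    (hdP : P.natDegree ≤ k) (hdQ : Q.natDegree ≤ k)
    (m M : ℝ) (hm : 0 < m) (hM : 0 ≤ M)
    (hin : ∀ z : ℂ, Complex.abs z ≤ a → m * Complex.abs (Q.eval z) ≤ Complex.abs (P.eval z))
    (hout : ∀ z : ℂ, b ≤ Complex.abs z → Complex.abs (P.eval z) ≤ M * Complex.abs (Q.eval z)) :
    (a/b)^k * m ≤ M := by
  have hb : 0 < b := lt_trans ha hab
  obtain ⟨c, hc0, hc1, havoid⟩ := circle_avoid (2*k) (by omega)
  set γ := c/3 with hγdef
  have hγ0 : 0 < γ := by positivity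
  have hγ1 : γ ≤ 1 := by rw [hγdef]; linarith
  set L := (a/b)^k * m with hLdef
  have hL0 : 0 < L := by positivity
  set D := γ^(2*k) with hDdef
  have hD0 : 0 < D := by positivity
  have hcP : 0 < Complex.abs P.leadingCoeff := Complex.abs.pos (leadingCoeff_ne_zero.mpr hP)
  have hcQ : 0 < Complex.abs Q.leadingCoeff := Complex.abs.pos (leadingCoeff_ne_zero.mpr hQ)
  have habk : (0:ℝ) < (a/b) := by positivity
  have habk1 : (a/b) ≤ 1 := by rw [div_le_one hb]; exact hab.le
  have key : ∀ N : ℕ, 0 < N → D * L^N ≤ M^N := by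
    intro N hN
    set T : Multiset ℂ := P.roots.map (·^N) + Q.roots.map (·^N) with hTdef
    have hTcard : Multiset.card T ≤ 2*k := by
      rw [hTdef, Multiset.card_add, Multiset.card_map, Multiset.card_map]
      have h1 := le_trans P.card_roots' hdP
      have h2 := le_trans Q.card_roots' hdQ
      omega
    obtain ⟨u, hu_abs, hu_avoid⟩ := havoid (b^N) (by positivity) T hTcard
    obtain ⟨v, hv_abs, hv_avoid⟩ := havoid (a^N) (by positivity) T hTcard
    -- N-th roots of u and v
    have hroot : ∀ x : ℂ, Complex.abs x > 0 → ∃ z : ℂ, z^N = x := by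
      intro x _
      obtain ⟨z, hz⟩ := Complex.exists_root (f := X^N - C x)
        (by rw [degree_X_pow_sub_C hN]; exact_mod_cast hN)
      refine ⟨z, ?_⟩
      have := hz
      simp only [IsRoot.def, eval_sub, eval_pow, eval_X, eval_C, sub_eq_zero] at this
      exact this
    obtain ⟨z, hzN⟩ := hroot u (by rw [hu_abs]; positivity)
    obtain ⟨w, hwN⟩ := hroot v (by rw [hv_abs]; positivity)
    have hz_abs : Complex.abs z = b := by
      apply pow_eq_nonneg' (Complex.abs.nonneg z) hb.le hN.ne'
      rw [← map_pow, hzN, hu_abs]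
    have hw_abs : Complex.abs w = a := by
      apply pow_eq_nonneg' (Complex.abs.nonneg w) ha.le hN.ne'
      rw [← map_pow, hwN, hv_abs]
    have hz0 : z ≠ 0 := fun h => by rw [h, map_zero] at hz_abs; linarith
    have hw0 : w ≠ 0 := fun h => by rw [h, map_zero] at hw_abs; linarith
    set cP := Complex.abs P.leadingCoeff
    set cQ := Complex.abs Q.leadingCoeff
    set PAu := (P.roots.map (fun α => Complex.abs (u - α^N))).prod with hPAu
    set PAv := (P.roots.map (fun α => Complex.abs (v - α^N))).prod with hPAv
    set QBu := (Q.roots.map (fun β => Complex.abs (u - β^N))).prod with hQBu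
    set QBv := (Q.roots.map (fun β => Complex.abs (v - β^N))).prod with hQBv
    have hmemP : ∀ α ∈ P.roots, α^N ∈ T := fun α hα =>
      Multiset.mem_add.mpr (Or.inl (Multiset.mem_map_of_mem _ hα))
    have hmemQ : ∀ β ∈ Q.roots, β^N ∈ T := fun β hβ =>
      Multiset.mem_add.mpr (Or.inr (Multiset.mem_map_of_mem _ hβ))
    have hζabs : ∀ ζ ∈ nthRootsFinset N (1 : ℂ), Complex.abs ζ = 1 := fun ζ hζ =>
      abs_one_of_pow' hN.ne' ((mem_nthRootsFinset hN 1).mp hζ)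
    -- step 1
    have step1 : cP^N * PAu ≤ M^N * (cQ^N * QBu) := by
      have h1 : ∏ ζ ∈ nthRootsFinset N (1 : ℂ), Complex.abs (P.eval (ζ*z))
          ≤ ∏ ζ ∈ nthRootsFinset N (1 : ℂ), (M * Complex.abs (Q.eval (ζ*z))) := by
        apply Finset.prod_le_prod (fun ζ _ => Complex.abs.nonneg _)
        intro ζ hζ
        apply hout
        rw [map_mul, hζabs ζ hζ, one_mul, hz_abs]
      rw [prod_rot_poly hN P z hz0, Finset.prod_mul_distrib, Finset.prod_const,
        card_nthRootsFinsetC hN, prod_rot_poly hN Q z hz0, hzN] at h1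
      exact h1
    -- step 2
    have step2 : m^N * (cQ^N * QBv) ≤ cP^N * PAv := by
      have h1 : ∏ ζ ∈ nthRootsFinset N (1 : ℂ), (m * Complex.abs (Q.eval (ζ*w)))
          ≤ ∏ ζ ∈ nthRootsFinset N (1 : ℂ), Complex.abs (P.eval (ζ*w)) := by
        apply Finset.prod_le_prod (fun ζ _ => by positivity)
        intro ζ hζ
        apply hin
        rw [map_mul, hζabs ζ hζ, one_mul, hw_abs]
      rw [prod_rot_poly hN P w hw0, Finset.prod_mul_distrib, Finset.prod_const,
        card_nthRootsFinsetC hN, prod_rot_poly hN Q w hw0, hwN] at h1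
      exact h1
    -- step 3
    have hpowle : a^N ≤ b^N := pow_le_pow_left₀ ha.le hab.le N
    have step3 : γ^k * PAv ≤ PAu := by
      have hle : (P.roots.map (fun α => γ * Complex.abs (v - α^N))).prod ≤ PAu := by
        apply ms_prod_le
        · intro x _; positivity
        · intro α hα
          apply est1 hc0 hc1 (by positivity : (0:ℝ) < b^N) (Complex.abs.nonneg (α^N))
          · rw [← hu_abs] at *
            exact hu_avoid _ (hmemP α hα)
          · rw [← hu_abs]; exact abs_sub_ge' u (α^N)
          · calc Complex.abs (v - α^N) ≤ Complex.abs v + Complex.abs (α^N) := abs_sub_le' _ _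
              _ ≤ b^N + Complex.abs (α^N) := by rw [hv_abs]; linarith
      rw [ms_prod_const_mul] at hle
      have hcard : Multiset.card P.roots ≤ k := le_trans P.card_roots' hdP
      calc γ^k * PAv ≤ γ^(Multiset.card P.roots) * PAv := by
            apply mul_le_mul_of_nonneg_right (pow_le_pow_of_le_one hγ0.le hγ1 hcard)
            exact ms_prod_nonneg _ _ (fun x _ => Complex.abs.nonneg _)
        _ ≤ PAu := hle
    -- step 4
    set δ := γ * (a/b)^N with hδdef
    have hδ0 : 0 < δ := by positivity
    have hδ1 : δ ≤ 1 := by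
      have : (a/b)^N ≤ 1 := pow_le_one₀ habk.le habk1
      nlinarith
    have hqS : (a/b)^N * b^N = a^N := by
      rw [div_pow]; field_simp
    have step4 : δ^k * QBu ≤ QBv := by
      have hle : (Q.roots.map (fun β => δ * Complex.abs (u - β^N))).prod ≤ QBv := by
        apply ms_prod_le
        · intro x _; positivity
        · intro β hβ
          have h := est2 hc0 hc1 (pow_pos habk N) (pow_le_one₀ habk.le habk1)
            (by positivity : (0:ℝ) < b^N) (Complex.abs.nonneg (β^N))
            (V := Complex.abs (v - β^N)) (U := Complex.abs (u - β^N))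
            ?_ ?_ ?_ (Complex.abs.nonneg _)
          · rw [hδdef]
            calc γ * (a/b)^N * Complex.abs (u - β^N)
                = (c/3 * (a/b)^N) * Complex.abs (u - β^N) := by rw [hγdef]
              _ ≤ Complex.abs (v - β^N) := h
          · rw [hqS]
            exact hv_avoid _ (hmemQ β hβ)
          · rw [hqS, ← hv_abs]
            exact abs_sub_ge' v (β^N)
          · calc Complex.abs (u - β^N) ≤ Complex.abs u + Complex.abs (β^N) := abs_sub_le' _ _
              _ ≤ b^N + Complex.abs (β^N) := by rw [hu_abs]
      rw [ms_prod_const_mul] at hle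
      have hcard : Multiset.card Q.roots ≤ k := le_trans Q.card_roots' hdQ
      calc δ^k * QBu ≤ δ^(Multiset.card Q.roots) * QBu := by
            apply mul_le_mul_of_nonneg_right (pow_le_pow_of_le_one hδ0.le hδ1 hcard)
            exact ms_prod_nonneg _ _ (fun x _ => Complex.abs.nonneg _)
        _ ≤ QBv := hle
    -- positivity of QBu
    have hQBu_pos : 0 < QBu := by
      apply ms_prod_pos
      intro β hβ
      calc (0:ℝ) < c * b^N := by positivity
        _ ≤ Complex.abs (u - β^N) := hu_avoid _ (hmemQ β hβ)
    have hPAv_nonneg : 0 ≤ PAv := ms_prod_nonneg _ _ (fun x _ => Complex.abs.nonneg _)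
    -- chain
    have chain : ((γ^k * δ^k) * m^N) * (cQ^N * QBu) ≤ M^N * (cQ^N * QBu) := by
      calc ((γ^k * δ^k) * m^N) * (cQ^N * QBu)
          = γ^k * (m^N * cQ^N * (δ^k * QBu)) := by ring
        _ ≤ γ^k * (m^N * cQ^N * QBv) := by
            exact mul_le_mul_of_nonneg_left
              (mul_le_mul_of_nonneg_left step4 (by positivity)) (by positivity : (0:ℝ) ≤ γ^k)
        _ = γ^k * (m^N * (cQ^N * QBv)) := by ring
        _ ≤ γ^k * (cP^N * PAv) := mul_le_mul_of_nonneg_left step2 (by positivity)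
        _ = cP^N * (γ^k * PAv) := by ring
        _ ≤ cP^N * PAu := mul_le_mul_of_nonneg_left step3 (by positivity)
        _ ≤ M^N * (cQ^N * QBu) := step1
    have hpos : 0 < cQ^N * QBu := mul_pos (pow_pos hcQ N) hQBu_pos
    have hcancel : (γ^k * δ^k) * m^N ≤ M^N := le_of_mul_le_mul_right chain hpos
    calc D * L^N = (γ^k * δ^k) * m^N := by rw [hDdef, hLdef, hδdef]; ring
      _ ≤ M^N := hcancel
  -- conclude
  by_contra hcon
  push_neg at hcon
  have hq1 : M / L < 1 := (div_lt_one hL0).mpr hcon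
  have hq0 : 0 ≤ M / L := div_nonneg hM hL0.le
  have htend := tendsto_pow_atTop_nhds_zero_of_lt_one hq0 hq1
  have hev : ∀ᶠ n in Filter.atTop, (M/L)^n < D := htend.eventually (gt_mem_nhds hD0)
  obtain ⟨N, hNlt, hNpos⟩ := (hev.and (Filter.eventually_gt_atTop 0)).exists
  have hD_le : D ≤ (M/L)^N := by
    rw [div_pow, le_div_iff₀ (pow_pos hL0 N)]
    exact key N hNpos
  exact absurd hD_le (not_le.mpr hNlt)


lemma exists_eval_ne_of_subset (P : Polynomial ℂ) (hP : P ≠ 0) {s t : ℝ} (hst : s < t)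
    (hs : 0 ≤ s) (S : Set ℂ) (hsub : ∀ x : ℝ, x ∈ Set.Icc s t → (x : ℂ) ∈ S) :
    ∃ z ∈ S, P.eval z ≠ 0 := by
  by_contra hcon
  push_neg at hcon
  apply hP
  apply P.eq_zero_of_infinite_isRoot
  apply Set.Infinite.mono (s := (fun x : ℝ => (x:ℂ)) '' Set.Icc s t)
  · rintro z ⟨x, hx, rfl⟩
    exact hcon _ (hsub x hx)
  · exact Set.Infinite.image (Complex.ofReal_injective.injOn) (Set.Icc_infinite hst)

theorem zolotarev_part1 (a b : ℝ) (ha : 0 < a) (hab : a < b)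
    (k : ℕ) (hk : 0 < k) (P Q : Polynomial ℂ) (hP : P ≠ 0) (hQ : Q ≠ 0)
    (hdP : P.degree ≤ (k : ℕ)) (hdQ : Q.degree ≤ (k : ℕ)) :
    ENNReal.ofReal ((a / b) ^ k) ≤
      (⨆ z ∈ {z : ℂ | b ≤ Complex.abs z},
          (‖P.eval z‖₊ : ENNReal) / (‖Q.eval z‖₊ : ENNReal)) /
        (⨅ z ∈ {z : ℂ | Complex.abs z ≤ a},
          (‖P.eval z‖₊ : ENNReal) / (‖Q.eval z‖₊ : ENNReal)) := by
  have hb : 0 < b := lt_trans ha hab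
  set Ms := ⨆ z ∈ {z : ℂ | b ≤ Complex.abs z},
      (‖P.eval z‖₊ : ENNReal) / (‖Q.eval z‖₊ : ENNReal) with hMs
  set ms := ⨅ z ∈ {z : ℂ | Complex.abs z ≤ a},
      (‖P.eval z‖₊ : ENNReal) / (‖Q.eval z‖₊ : ENNReal) with hms
  have hle_Ms : ∀ z : ℂ, b ≤ Complex.abs z →
      (‖P.eval z‖₊ : ENNReal) / (‖Q.eval z‖₊ : ENNReal) ≤ Ms := by
    intro z hz
    exact le_iSup₂ (f := fun (z : ℂ) (_ : z ∈ {z : ℂ | b ≤ Complex.abs z}) =>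
      (‖P.eval z‖₊ : ENNReal) / (‖Q.eval z‖₊ : ENNReal)) z hz
  have hge_ms : ∀ z : ℂ, Complex.abs z ≤ a →
      ms ≤ (‖P.eval z‖₊ : ENNReal) / (‖Q.eval z‖₊ : ENNReal) := by
    intro z hz
    exact iInf₂_le (f := fun (z : ℂ) (_ : z ∈ {z : ℂ | Complex.abs z ≤ a}) =>
      (‖P.eval z‖₊ : ENNReal) / (‖Q.eval z‖₊ : ENNReal)) z hz
  -- ms is finite
  have hms_ne_top : ms ≠ ⊤ := by
    obtain ⟨z₀, hz₀S, hz₀⟩ := exists_eval_ne_of_subset Q hQ ha (le_refl 0)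
      {z : ℂ | Complex.abs z ≤ a} (by
        intro x hx
        simp only [Set.mem_setOf_eq, Complex.abs_ofReal]
        rw [abs_of_nonneg hx.1]
        exact hx.2)
    intro htop
    have h := hge_ms z₀ hz₀S
    rw [htop, top_le_iff] at h
    rw [← ENNReal.coe_div (by simpa using hz₀)] at h
    exact ENNReal.coe_ne_top h
  by_cases hms0 : ms = 0
  · -- sup positive, ratio = top
    obtain ⟨z₁, hz₁S, hz₁⟩ := exists_eval_ne_of_subset P hP (lt_add_one b) hb.le
      {z : ℂ | b ≤ Complex.abs z} (by
        intro x hx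
        simp only [Set.mem_setOf_eq, Complex.abs_ofReal]
        rw [abs_of_nonneg (le_trans hb.le hx.1)]
        exact hx.1)
    have hMs0 : Ms ≠ 0 := by
      intro h0
      have h := hle_Ms z₁ hz₁S
      rw [h0, le_zero_iff] at h
      have : (‖P.eval z₁‖₊ : ENNReal) ≠ 0 := by simpa using hz₁
      rcases ENNReal.div_eq_zero_iff.mp h with h' | h'
      · exact this h'
      · exact ENNReal.coe_ne_top h'
    rw [hms0, ENNReal.div_zero hMs0]
    exact le_top
  by_cases hMstop : Ms = ⊤
  · rw [hMstop, ENNReal.top_div_of_ne_top hms_ne_top]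
    exact le_top
  -- main case
  set m := ms.toReal with hmdef
  set M := Ms.toReal with hMdef
  have hm0 : 0 < m := ENNReal.toReal_pos hms0 hms_ne_top
  have hM0 : 0 ≤ M := ENNReal.toReal_nonneg
  have hin : ∀ z : ℂ, Complex.abs z ≤ a →
      m * Complex.abs (Q.eval z) ≤ Complex.abs (P.eval z) := by
    intro z hz
    by_cases hQz : Q.eval z = 0
    · rw [hQz, map_zero, mul_zero]
      exact Complex.abs.nonneg _
    · have h := hge_ms z hz
      rw [← ENNReal.coe_div (by simpa using hQz)] at h
      have h2 := ENNReal.toReal_mono ENNReal.coe_ne_top h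
      rw [ENNReal.coe_toReal, NNReal.coe_div, coe_nnnorm, coe_nnnorm] at h2
      rw [← Complex.norm_eq_abs, ← Complex.norm_eq_abs]
      rw [← le_div_iff₀ (by simpa [norm_pos_iff] using hQz)]
      exact h2
  have hout : ∀ z : ℂ, b ≤ Complex.abs z →
      Complex.abs (P.eval z) ≤ M * Complex.abs (Q.eval z) := by
    intro z hz
    by_cases hQz : Q.eval z = 0
    · have hPz : P.eval z = 0 := by
        by_contra hPz
        have h := hle_Ms z hz
        rw [hQz, nnnorm_zero, ENNReal.coe_zero, ENNReal.div_zero (by simpa using hPz)] at h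
        exact hMstop (top_le_iff.mp h)
      simp [hPz, hQz]
    · have h := hle_Ms z hz
      rw [← ENNReal.coe_div (by simpa using hQz)] at h
      have h2 := ENNReal.toReal_mono hMstop h
      rw [ENNReal.coe_toReal, NNReal.coe_div, coe_nnnorm, coe_nnnorm] at h2
      rw [← Complex.norm_eq_abs, ← Complex.norm_eq_abs]
      rw [← div_le_iff₀ (by simpa [norm_pos_iff] using hQz)]
      exact h2
  have hcore := core_ineq a b ha hab k hk P Q hP hQ
    (natDegree_le_iff_degree_le.mpr hdP) (natDegree_le_iff_degree_le.mpr hdQ)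
    m M hm0 hM0 hin hout
  rw [ENNReal.le_div_iff_mul_le (Or.inl hms0) (Or.inl hms_ne_top)]
  calc ENNReal.ofReal ((a/b)^k) * ms = ENNReal.ofReal ((a/b)^k) * ENNReal.ofReal m := by
        rw [hmdef, ENNReal.ofReal_toReal hms_ne_top]
    _ = ENNReal.ofReal ((a/b)^k * m) := (ENNReal.ofReal_mul (by positivity)).symm
    _ ≤ ENNReal.ofReal M := ENNReal.ofReal_le_ofReal hcore
    _ = Ms := ENNReal.ofReal_toReal hMstop


theorem zolotarev_part2 (a b : ℝ) (ha : 0 < a) (hab : a < b) (k : ℕ) (hk : 0 < k) :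
    (⨆ z ∈ {z : ℂ | b ≤ Complex.abs z},
        (‖(1 : ℂ)‖₊ : ENNReal) / (‖z ^ k‖₊ : ENNReal)) /
      (⨅ z ∈ {z : ℂ | Complex.abs z ≤ a},
        (‖(1 : ℂ)‖₊ : ENNReal) / (‖z ^ k‖₊ : ENNReal))
      = ENNReal.ofReal ((a / b) ^ k) := by
  have hb : 0 < b := lt_trans ha hab
  have hcoe : ∀ z : ℂ, (‖z ^ k‖₊ : ENNReal) = ENNReal.ofReal (Complex.abs z ^ k) := by
    intro z
    rw [← ENNReal.ofReal_coe_nnreal, coe_nnnorm, norm_pow, Complex.norm_eq_abs]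
  have hsup : (⨆ z ∈ {z : ℂ | b ≤ Complex.abs z},
      (‖(1 : ℂ)‖₊ : ENNReal) / (‖z ^ k‖₊ : ENNReal)) = (ENNReal.ofReal (b ^ k))⁻¹ := by
    apply le_antisymm
    · apply iSup₂_le
      intro z hz
      simp only [Set.mem_setOf_eq] at hz
      rw [nnnorm_one, ENNReal.coe_one, one_div, hcoe]
      apply ENNReal.inv_le_inv.mpr
      exact ENNReal.ofReal_le_ofReal (pow_le_pow_left₀ hb.le hz k)
    · have h := le_iSup₂ (f := fun (z : ℂ) (_ : z ∈ {z : ℂ | b ≤ Complex.abs z}) =>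
        (‖(1 : ℂ)‖₊ : ENNReal) / (‖z ^ k‖₊ : ENNReal)) (b:ℂ)
        (by simp [abs_of_pos hb])
      simpa only [nnnorm_one, ENNReal.coe_one, one_div, hcoe, Complex.abs_ofReal,
        abs_of_pos hb] using h
  have hinf : (⨅ z ∈ {z : ℂ | Complex.abs z ≤ a},
      (‖(1 : ℂ)‖₊ : ENNReal) / (‖z ^ k‖₊ : ENNReal)) = (ENNReal.ofReal (a ^ k))⁻¹ := by
    apply le_antisymm
    · have h := iInf₂_le (f := fun (z : ℂ) (_ : z ∈ {z : ℂ | Complex.abs z ≤ a}) =>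
        (‖(1 : ℂ)‖₊ : ENNReal) / (‖z ^ k‖₊ : ENNReal)) (a:ℂ)
        (by simp [abs_of_pos ha])
      simpa only [nnnorm_one, ENNReal.coe_one, one_div, hcoe, Complex.abs_ofReal,
        abs_of_pos ha] using h
    · apply le_iInf₂
      intro z hz
      simp only [Set.mem_setOf_eq] at hz
      rw [nnnorm_one, ENNReal.coe_one, one_div, hcoe]
      apply ENNReal.inv_le_inv.mpr
      exact ENNReal.ofReal_le_ofReal (pow_le_pow_left₀ (Complex.abs.nonneg z) hz k)
  rw [hsup, hinf]
  have hA : ENNReal.ofReal (a ^ k) ≠ 0 := by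
    simp only [ne_eq, ENNReal.ofReal_eq_zero, not_le]
    positivity
  have hAtop : ENNReal.ofReal (a ^ k) ≠ ⊤ := ENNReal.ofReal_ne_top
  have hBtop : ENNReal.ofReal (b ^ k) ≠ ⊤ := ENNReal.ofReal_ne_top
  rw [div_eq_mul_inv, inv_inv, mul_comm, ← div_eq_mul_inv,
    ← ENNReal.ofReal_div_of_pos (by positivity), ← div_pow]


/-- For `0 < a < b`, `I = {|z| ≤ a}`, `O = {|z| ≥ b}`, every rational
function `r = P/Q` with `deg P ≤ k`, `deg Q ≤ k`, `P ≠ 0 ≠ Q` has separation ratio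
(in `[0,∞]`) `sup_{z∈O}|r| / inf_{z∈I}|r| ≥ (a/b)^k`; the infimum of the Zolotarev
third problem `Z_k(O,I)` equals `(a/b)^k` and is attained by `r(z) = z^{−k}`
(i.e. `P = 1`, `Q = z^k`). -/
theorem zolotarev_third_problem_annulus (a b : ℝ) (ha : 0 < a) (hab : a < b)
    (k : ℕ) (hk : 0 < k) :
    (∀ P Q : Polynomial ℂ, P ≠ 0 → Q ≠ 0 → P.degree ≤ (k : ℕ) → Q.degree ≤ (k : ℕ) →
      ENNReal.ofReal ((a / b) ^ k) ≤
        (⨆ z ∈ {z : ℂ | b ≤ ‖z‖},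
            (‖P.eval z‖₊ : ENNReal) / (‖Q.eval z‖₊ : ENNReal)) /
          (⨅ z ∈ {z : ℂ | ‖z‖ ≤ a},
            (‖P.eval z‖₊ : ENNReal) / (‖Q.eval z‖₊ : ENNReal))) ∧
    (⨆ z ∈ {z : ℂ | b ≤ ‖z‖},
        (‖(1 : ℂ)‖₊ : ENNReal) / (‖z ^ k‖₊ : ENNReal)) /
      (⨅ z ∈ {z : ℂ | ‖z‖ ≤ a},
        (‖(1 : ℂ)‖₊ : ENNReal) / (‖z ^ k‖₊ : ENNReal))
      = ENNReal.ofReal ((a / b) ^ k) := by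
  
  constructor
  · intro P Q hP hQ hdP hdQ
    exact zolotarev_part1 a b ha hab k hk P Q hP hQ hdP hdQ
  · exact zolotarev_part2 a b ha hab k hk
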